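/- Let I = I[x,y] and J = I[s,t] be interval persistence modules over ℤ with |y−x| < 2ε, |t−s| < 2ε, |x−s| ≤ ε, |y−t| ≤ ε. Then the following are equivalent: (1) s−ε ≤ x ≤ t−ε ≤ y or x−ε ≤ s ≤ y−ε ≤ t; (2) Hom(I[x,y], I[s,t]Λ_ε) ≠ 0 or Hom(I[s,t], I[x,y]Λ_ε) ≠ 0; (3) there exists a Λ_ε-interleaving (φ, ψ) between I[x,y] and I[s,t] with φ ≠ 0 or ψ ≠ 0. -/

import Mathlib

open CategoryTheory Classical

/-- The thin representation of a preorder `Q` with values `K` on a convex set `S`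
and `0` elsewhere, with identity internal maps on `S` (the interval representation
with support `S` when `S` is a connected convex set). -/
noncomputable def convMod (K : Type) [Field K] {Q : Type*} [Preorder Q] (S : Set Q)
    (hconv : ∀ ⦃a b c : Q⦄, a ≤ b → b ≤ c → a ∈ S → c ∈ S → b ∈ S) :
    Q ⥤ ModuleCat K where
  obj a := ModuleCat.of K (PLift (a ∈ S) → K)
  map {a b} _ := ModuleCat.ofHom
    { toFun := fun g _ => if h : a ∈ S then g ⟨h⟩ else 0
      map_add' := by
        intro g1 g2; funext s; by_cases h : a ∈ S
        · simp only [dif_pos h]; rfl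
        · simp only [dif_neg h]; exact (add_zero (0 : K)).symm
      map_smul' := by
        intro c g; funext s; by_cases h : a ∈ S
        · simp only [dif_pos h]; rfl
        · simp only [dif_neg h]; exact (smul_zero c).symm }
  map_id a := by
    apply ModuleCat.hom_ext; apply LinearMap.ext; intro g
    funext s
    change (if h : a ∈ S then g ⟨h⟩ else 0) = g s
    rw [dif_pos s.down]
  map_comp {a b c} f g := by
    apply ModuleCat.hom_ext; apply LinearMap.ext; intro v
    funext s
    change (if h : a ∈ S then v ⟨h⟩ else 0) =
      (if hb : b ∈ S then (if ha : a ∈ S then v ⟨ha⟩ else 0) else 0)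
    by_cases h : a ∈ S
    · rw [dif_pos h, dif_pos (hconv (leOfHom f) (leOfHom g) h s.down)]
    · rw [dif_neg h]
      by_cases hb : b ∈ S
      · rw [dif_pos hb]
      · rw [dif_neg hb]

/-- The interval persistence module `I[x,y] : ℤ ⥤ vect_K`. -/
noncomputable def intervalModule (K : Type) [Field K] (x y : ℤ) : ℤ ⥤ ModuleCat K :=
  convMod K (Set.Icc x y)
    (fun _ _ _ hab hbc ha hc => ⟨ha.1.trans hab, hbc.trans hc.2⟩)

/-- The `ε`-shift functor `Λ_ε : ℤ ⥤ ℤ`, `a ↦ a + ε`. -/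
noncomputable def shiftF (ε : ℕ) : ℤ ⥤ ℤ :=
  Monotone.functor (f := fun a : ℤ => a + ε) (fun _ _ h => add_le_add_left h _)

/-- A `Λ`-interleaving between representations `M, N : Q ⥤ D` of a proset `Q`,
given componentwise. -/
def IsInterleaving {Q : Type*} [Preorder Q] {D : Type*} [Category D] (Λ : Q → Q)
    (hmono : Monotone Λ) (hle : ∀ x, x ≤ Λ x) (M N : Q ⥤ D)
    (φ : ∀ x, M.obj x ⟶ N.obj (Λ x)) (ψ : ∀ x, N.obj x ⟶ M.obj (Λ x)) : Prop :=
  (∀ x y (h : x ≤ y), M.map (homOfLE h) ≫ φ y = φ x ≫ N.map (homOfLE (hmono h))) ∧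
  (∀ x y (h : x ≤ y), N.map (homOfLE h) ≫ ψ y = ψ x ≫ M.map (homOfLE (hmono h))) ∧
  (∀ x, φ x ≫ ψ (Λ x) = M.map (homOfLE ((hle x).trans (hle (Λ x))))) ∧
  (∀ x, ψ x ≫ φ (Λ x) = N.map (homOfLE ((hle x).trans (hle (Λ x)))))

section Aux
variable {K : Type} [Field K]

lemma hom_zero_of_not_mem_src {x y a : ℤ} (h : a ∉ Set.Icc x y)
    {M : ModuleCat K} (f : (intervalModule K x y).obj a ⟶ M) : f = 0 := by
  ext g
  have : g = 0 := funext fun p => absurd p.down h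
  rw [this, map_zero]; rfl

lemma hom_zero_of_not_mem_tgt {s t b : ℤ} (h : b ∉ Set.Icc s t)
    {M : ModuleCat K} (f : M ⟶ (intervalModule K s t).obj b) : f = 0 := by
  ext g
  funext p; exact absurd p.down h

lemma map_eq_zero_of_long {x y : ℤ} {a b : ℤ} (hab : a ≤ b) (hlong : y - x < b - a) :
    (intervalModule K x y).map (homOfLE hab) = 0 := by
  by_cases hb : b ∈ Set.Icc x y
  · ext g; funext p
    have ha : a ∉ Set.Icc x y := by
      rw [Set.mem_Icc] at hb ⊢; omega
    change (@dite K (a ∈ Set.Icc x y) (Classical.propDecidable _)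
      (fun h => g ⟨h⟩) (fun _ => 0)) = _
    rw [dif_neg ha]; rfl
  · exact hom_zero_of_not_mem_tgt hb _

/-- The canonical componentwise map `I[x,y] → I[s,t]Λ_ε`. -/
noncomputable def canHom (K : Type) [Field K] (ε : ℕ) (x y s t : ℤ) (a : ℤ) :
    (intervalModule K x y).obj a ⟶ (intervalModule K s t).obj (a + ε) :=
  ModuleCat.ofHom <|
  { toFun := fun g _ => @dite K (a ∈ Set.Icc x y) (Classical.propDecidable _)
      (fun h => g ⟨h⟩) (fun _ => 0)
    map_add' := by
      intro g1 g2; funext p; by_cases h : a ∈ Set.Icc x y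
      · simp only [dif_pos h]; rfl
      · simp only [dif_neg h]; exact (add_zero (0 : K)).symm
    map_smul' := by
      intro c g; funext p; by_cases h : a ∈ Set.Icc x y
      · simp only [dif_pos h]; rfl
      · simp only [dif_neg h]; exact (smul_zero c).symm }

lemma canHom_ne_zero {ε : ℕ} {x y s t a : ℤ} (ha : a ∈ Set.Icc x y)
    (haε : a + ε ∈ Set.Icc s t) : canHom K ε x y s t a ≠ 0 := by
  intro h0
  have h1 : canHom K ε x y s t a (fun _ => (1 : K)) ⟨haε⟩ = 0 := by rw [h0]; rfl
  change (@dite K (a ∈ Set.Icc x y) (Classical.propDecidable _)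
      (fun h => (1 : K)) (fun _ => 0)) = 0 at h1
  rw [dif_pos ha] at h1
  exact one_ne_zero h1

lemma canHom_natural (ε : ℕ) (x y s t : ℤ) (hsx : s ≤ x + ε) (hty : t ≤ y + ε)
    (a b : ℤ) (h : a ≤ b) :
    (intervalModule K x y).map (homOfLE h) ≫ canHom K ε x y s t b =
      canHom K ε x y s t a ≫
        (intervalModule K s t).map (homOfLE (add_le_add_left h (ε : ℤ))) := by
  ext g; funext p
  have hp := p.down
  rw [Set.mem_Icc] at hp
  change (@dite K (b ∈ Set.Icc x y) (Classical.propDecidable _)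
      (fun hb => @dite K (a ∈ Set.Icc x y) (Classical.propDecidable _)
        (fun ha => g ⟨ha⟩) (fun _ => 0)) (fun _ => 0)) =
    (@dite K (a + ε ∈ Set.Icc s t) (Classical.propDecidable _)
      (fun hc => @dite K (a ∈ Set.Icc x y) (Classical.propDecidable _)
        (fun ha => g ⟨ha⟩) (fun _ => 0)) (fun _ => 0))
  by_cases ha : a ∈ Set.Icc x y
  · rw [Set.mem_Icc] at ha
    have hb : b ∈ Set.Icc x y := Set.mem_Icc.2 ⟨by omega, by omega⟩
    have hc : a + ε ∈ Set.Icc s t := Set.mem_Icc.2 ⟨by omega, by omega⟩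
    rw [dif_pos hb, dif_pos hc]
  · simp only [dif_neg ha]
    simp

lemma IsInterleaving.symm {Q : Type*} [Preorder Q] {D : Type*} [Category D] {Λ : Q → Q}
    {hmono : Monotone Λ} {hle : ∀ x, x ≤ Λ x} {M N : Q ⥤ D}
    {φ : ∀ x, M.obj x ⟶ N.obj (Λ x)} {ψ : ∀ x, N.obj x ⟶ M.obj (Λ x)}
    (h : IsInterleaving Λ hmono hle M N φ ψ) :
    IsInterleaving Λ hmono hle N M ψ φ :=
  ⟨h.2.1, h.1, h.2.2.2, h.2.2.1⟩

/-- Construction of an interleaving from the overlap condition. -/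
lemma interleave_left (K : Type) [Field K] (ε : ℕ) (x y s t : ℤ) (hxy : x ≤ y)
    (h1 : y - x < 2 * (ε : ℤ)) (h2 : t - s < 2 * (ε : ℤ))
    (hsx : s ≤ x + ε) (hxt : x + ε ≤ t) (hty : t ≤ y + ε) :
    ∃ (φ : ∀ a : ℤ, (intervalModule K x y).obj a ⟶ (intervalModule K s t).obj (a + ε))
      (ψ : ∀ a : ℤ, (intervalModule K s t).obj a ⟶ (intervalModule K x y).obj (a + ε)),
      IsInterleaving (fun a : ℤ => a + ε) (fun _ _ h => add_le_add_left h _)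
        (fun a => le_add_of_nonneg_right (Int.natCast_nonneg ε))
        (intervalModule K x y) (intervalModule K s t) φ ψ ∧
      ((∃ a, φ a ≠ 0) ∨ (∃ a, ψ a ≠ 0)) := by
  refine ⟨canHom K ε x y s t, fun _ => 0, ⟨?_, ?_, ?_, ?_⟩,
    Or.inl ⟨x, canHom_ne_zero (Set.mem_Icc.2 ⟨le_refl x, hxy⟩)
      (Set.mem_Icc.2 ⟨hsx, hxt⟩)⟩⟩
  · intro a b h
    exact canHom_natural ε x y s t hsx hty a b h
  · intro a b h; simp
  · intro a
    simp only [Limits.comp_zero]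
    symm
    exact map_eq_zero_of_long _ (by omega)
  · intro a
    simp only [Limits.zero_comp]
    symm
    exact map_eq_zero_of_long _ (by omega)

end Aux

/-- For interval modules `I[x,y]`, `I[s,t]` over `ℤ` with
`|y−x| < 2ε`, `|t−s| < 2ε`, `|x−s| ≤ ε`, `|y−t| ≤ ε`, the following are
equivalent: (1) `s−ε ≤ x ≤ t−ε ≤ y` or `x−ε ≤ s ≤ y−ε ≤ t`;
(2) `Hom(I[x,y], I[s,t]Λ_ε) ≠ 0` or `Hom(I[s,t], I[x,y]Λ_ε) ≠ 0`;
(3) there is a `Λ_ε`-interleaving `(φ, ψ)` between `I[x,y]` and `I[s,t]` with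
`φ ≠ 0` or `ψ ≠ 0`. -/
theorem interval_interleaving_tfae (K : Type) [Field K] (ε : ℕ) (x y s t : ℤ)
    (hxy : x ≤ y) (hst : s ≤ t)
    (hshort1 : |y - x| < 2 * (ε : ℤ)) (hshort2 : |t - s| < 2 * (ε : ℤ))
    (hc1 : |x - s| ≤ (ε : ℤ)) (hc2 : |y - t| ≤ (ε : ℤ)) :
    (((s - ε ≤ x ∧ x ≤ t - ε ∧ t - ε ≤ y) ∨ (x - ε ≤ s ∧ s ≤ y - ε ∧ y - ε ≤ t)) ↔
      ((∃ f : intervalModule K x y ⟶ shiftF ε ⋙ intervalModule K s t, f ≠ 0) ∨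
       (∃ g : intervalModule K s t ⟶ shiftF ε ⋙ intervalModule K x y, g ≠ 0))) ∧
    (((∃ f : intervalModule K x y ⟶ shiftF ε ⋙ intervalModule K s t, f ≠ 0) ∨
      (∃ g : intervalModule K s t ⟶ shiftF ε ⋙ intervalModule K x y, g ≠ 0)) ↔
      (∃ (φ : ∀ a : ℤ, (intervalModule K x y).obj a ⟶
            (intervalModule K s t).obj (a + ε))
         (ψ : ∀ a : ℤ, (intervalModule K s t).obj a ⟶
            (intervalModule K x y).obj (a + ε)),
        IsInterleaving (fun a : ℤ => a + ε) (fun _ _ h => add_le_add_left h _)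
          (fun a => le_add_of_nonneg_right (Int.natCast_nonneg ε))
          (intervalModule K x y) (intervalModule K s t) φ ψ ∧
        ((∃ a, φ a ≠ 0) ∨ (∃ a, ψ a ≠ 0)))) := by
  rw [abs_lt] at hshort1 hshort2
  rw [abs_le] at hc1 hc2
  -- (2) → (1)
  have h21 : ((∃ f : intervalModule K x y ⟶ shiftF ε ⋙ intervalModule K s t, f ≠ 0) ∨
      (∃ g : intervalModule K s t ⟶ shiftF ε ⋙ intervalModule K x y, g ≠ 0)) →
      ((s - ε ≤ x ∧ x ≤ t - ε ∧ t - ε ≤ y) ∨ (x - ε ≤ s ∧ s ≤ y - ε ∧ y - ε ≤ t)) := by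
    rintro (⟨f, hf⟩ | ⟨f, hf⟩)
    · obtain ⟨a, ha⟩ : ∃ a, f.app a ≠ 0 := by
        by_contra h
        push_neg at h
        exact hf (NatTrans.ext (funext fun a => h a))
      have ha1 : a ∈ Set.Icc x y := by
        by_contra hmem
        exact ha (hom_zero_of_not_mem_src hmem _)
      have ha2 : a + ε ∈ Set.Icc s t := by
        by_contra hmem
        exact ha (hom_zero_of_not_mem_tgt hmem (f.app a))
      rw [Set.mem_Icc] at ha1 ha2
      exact Or.inl ⟨by omega, by omega, by omega⟩
    · obtain ⟨a, ha⟩ : ∃ a, f.app a ≠ 0 := by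
        by_contra h
        push_neg at h
        exact hf (NatTrans.ext (funext fun a => h a))
      have ha1 : a ∈ Set.Icc s t := by
        by_contra hmem
        exact ha (hom_zero_of_not_mem_src hmem _)
      have ha2 : a + ε ∈ Set.Icc x y := by
        by_contra hmem
        exact ha (hom_zero_of_not_mem_tgt hmem (f.app a))
      rw [Set.mem_Icc] at ha1 ha2
      exact Or.inr ⟨by omega, by omega, by omega⟩
  -- (1) → (3)
  have h13 : ((s - ε ≤ x ∧ x ≤ t - ε ∧ t - ε ≤ y) ∨ (x - ε ≤ s ∧ s ≤ y - ε ∧ y - ε ≤ t)) →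
      (∃ (φ : ∀ a : ℤ, (intervalModule K x y).obj a ⟶
            (intervalModule K s t).obj (a + ε))
         (ψ : ∀ a : ℤ, (intervalModule K s t).obj a ⟶
            (intervalModule K x y).obj (a + ε)),
        IsInterleaving (fun a : ℤ => a + ε) (fun _ _ h => add_le_add_left h _)
          (fun a => le_add_of_nonneg_right (Int.natCast_nonneg ε))
          (intervalModule K x y) (intervalModule K s t) φ ψ ∧
        ((∃ a, φ a ≠ 0) ∨ (∃ a, ψ a ≠ 0))) := by
    rintro (⟨ha, hb, hc⟩ | ⟨ha, hb, hc⟩)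
    · exact interleave_left K ε x y s t hxy (by omega) (by omega)
        (by omega) (by omega) (by omega)
    · obtain ⟨φ, ψ, hil, hnz⟩ := interleave_left K ε s t x y hst (by omega) (by omega)
        (by omega) (by omega) (by omega)
      exact ⟨ψ, φ, hil.symm, hnz.symm⟩
  -- (3) → (2)
  have h32 : (∃ (φ : ∀ a : ℤ, (intervalModule K x y).obj a ⟶
            (intervalModule K s t).obj (a + ε))
         (ψ : ∀ a : ℤ, (intervalModule K s t).obj a ⟶
            (intervalModule K x y).obj (a + ε)),
        IsInterleaving (fun a : ℤ => a + ε) (fun _ _ h => add_le_add_left h _)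
          (fun a => le_add_of_nonneg_right (Int.natCast_nonneg ε))
          (intervalModule K x y) (intervalModule K s t) φ ψ ∧
        ((∃ a, φ a ≠ 0) ∨ (∃ a, ψ a ≠ 0))) →
      ((∃ f : intervalModule K x y ⟶ shiftF ε ⋙ intervalModule K s t, f ≠ 0) ∨
       (∃ g : intervalModule K s t ⟶ shiftF ε ⋙ intervalModule K x y, g ≠ 0)) := by
    rintro ⟨φ, ψ, ⟨nat1, nat2, -, -⟩, (⟨a, ha⟩ | ⟨a, ha⟩)⟩
    · refine Or.inl ⟨{ app := φ, naturality := ?_ }, ?_⟩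
      · intro a b f
        have hf : f = homOfLE (leOfHom f) := Subsingleton.elim _ _
        rw [hf, Functor.comp_map]
        have hg : (shiftF ε).map (homOfLE (leOfHom f)) =
            homOfLE (add_le_add_left (leOfHom f) (ε : ℤ)) := Subsingleton.elim _ _
        rw [hg]
        exact nat1 a b (leOfHom f)
      · intro h0
        exact ha (congrArg (fun η => η.app a) h0)
    · refine Or.inr ⟨{ app := ψ, naturality := ?_ }, ?_⟩
      · intro a b f
        have hf : f = homOfLE (leOfHom f) := Subsingleton.elim _ _
        rw [hf, Functor.comp_map]
        have hg : (shiftF ε).map (homOfLE (leOfHom f)) =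
            homOfLE (add_le_add_left (leOfHom f) (ε : ℤ)) := Subsingleton.elim _ _
        rw [hg]
        exact nat2 a b (leOfHom f)
      · intro h0
        exact ha (congrArg (fun η => η.app a) h0)
  exact ⟨⟨fun h1 => h32 (h13 h1), h21⟩, ⟨fun h2 => h13 (h21 h2), h32⟩⟩
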